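/- Let A be the set of all real-valued sequences a = (αₙ)_{n∈ℕ} with αₙ ∈ [0,1] for all n, and let B be the set of all finitely supported real-valued sequences b = (βₙ)_{n∈ℕ} with Σₙ |βₙ| ≤ 1. Define h : A × B → ℝ by h(a,b) = Σₙ αₙβₙ, and define the semimetrics d_A(a,a') := sup_{b∈B}|h(a,b) − h(a',b)| on A and d_B(b,b') := sup_{a∈A}|h(a,b) − h(a,b')| on B. Then N_A(1/2) = 1, N_B(1) = 1, and for every ρ ∈ (0,1) the intrinsic covering number N_B(ρ) is infinite (consequently N_B^Δ(ρ) is infinite for every ρ ∈ (0,1/2)). -/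

import Mathlib

noncomputable def icov {E : Type*} (d : E → E → ℝ) (S : Set E) (ε : ℝ) : ℕ∞ :=
  sInf ((fun F : Finset E => (F.card : ℕ∞)) ''
    {F : Finset E | ↑F ⊆ S ∧ ∀ x ∈ S, ∃ y ∈ F, d x y ≤ ε})

noncomputable def dcovIn {E : Type*} (d : E → E → ℝ) (S : Set E) (ε : ℝ) : ℕ∞ :=
  sInf ((fun k : ℕ => (k : ℕ∞)) ''
    {k : ℕ | ∃ G : Fin k → Set E, (∀ i, G i ⊆ S) ∧
      (∀ i, ∀ x ∈ G i, ∀ y ∈ G i, d x y ≤ 2 * ε) ∧ S ⊆ ⋃ i, G i})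

private lemma tsum_fin (a b : ℕ → ℝ) (hb : (Function.support b).Finite) :
    ∑' n, a n * b n = ∑ n ∈ hb.toFinset, a n * b n := by
  refine tsum_eq_sum fun n hn => ?_
  rw [Set.Finite.mem_toFinset] at hn
  rw [Function.notMem_support.mp hn, mul_zero]

private lemma tsum_fin_abs (b : ℕ → ℝ) (hb : (Function.support b).Finite) :
    ∑' n, |b n| = ∑ n ∈ hb.toFinset, |b n| := by
  refine tsum_eq_sum fun n hn => ?_
  rw [Set.Finite.mem_toFinset] at hn
  rw [Function.notMem_support.mp hn, abs_zero]

private lemma tsum_mul_bound {a b : ℕ → ℝ} {C : ℝ} (hC : 0 ≤ C) (ha : ∀ n, |a n| ≤ C)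
    (hb : (Function.support b).Finite) (hb1 : ∑' n, |b n| ≤ 1) :
    |∑' n, a n * b n| ≤ C := by
  rw [tsum_fin a b hb]
  rw [tsum_fin_abs b hb] at hb1
  calc |∑ n ∈ hb.toFinset, a n * b n| ≤ ∑ n ∈ hb.toFinset, |a n * b n| :=
        Finset.abs_sum_le_sum_abs _ _
    _ ≤ ∑ n ∈ hb.toFinset, C * |b n| := by
        refine Finset.sum_le_sum fun n _ => ?_
        rw [abs_mul]
        exact mul_le_mul_of_nonneg_right (ha n) (abs_nonneg _)
    _ = C * ∑ n ∈ hb.toFinset, |b n| := by rw [Finset.mul_sum]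
    _ ≤ C * 1 := mul_le_mul_of_nonneg_left hb1 hC
    _ = C := mul_one C

private lemma tsum_pair_bound {a c b : ℕ → ℝ} {C : ℝ} (hC : 0 ≤ C)
    (hac : ∀ n, |a n - c n| ≤ C)
    (hb : (Function.support b).Finite) (hb1 : ∑' n, |b n| ≤ 1) :
    |(∑' n, a n * b n) - ∑' n, c n * b n| ≤ C := by
  have key : (∑' n, a n * b n) - ∑' n, c n * b n = ∑' n, (a n - c n) * b n := by
    rw [tsum_fin a b hb, tsum_fin c b hb, tsum_fin (fun n => a n - c n) b hb,
      ← Finset.sum_sub_distrib]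
    exact Finset.sum_congr rfl fun n _ => (sub_mul _ _ _).symm
  rw [key]
  exact tsum_mul_bound hC hac hb hb1

private def eseq (n : ℕ) : ℕ → ℝ := fun k => if k = n then 1 else 0

private lemma tsum_eseq_mul (n : ℕ) (b : ℕ → ℝ) : ∑' k, eseq n k * b k = b n := by
  rw [tsum_eq_single n (fun k hk => by simp [eseq, hk])]
  simp [eseq]

private lemma eseq_support (n : ℕ) : (Function.support (eseq n)).Finite := by
  refine (Set.finite_singleton n).subset fun k hk => ?_
  rcases eq_or_ne k n with rfl | hkn
  · exact Set.mem_singleton _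
  · exact absurd (by simp [eseq, hkn]) (Function.mem_support.mp hk)

private lemma eseq_abs_tsum (n : ℕ) : ∑' k, |eseq n k| = 1 := by
  rw [tsum_eq_single n (fun k hk => by simp [eseq, hk])]
  simp [eseq]

/-- Let `A` be the set of sequences with values in `[0,1]`, and `B` the
set of finitely supported real sequences `b` with `∑ₙ |bₙ| ≤ 1`.  Let
`h(a,b) = ∑ₙ aₙbₙ`, with the associated semimetrics `d_A` on `A` and `d_B` on `B`.
Then `N_A(1/2) = 1`, `N_B(1) = 1`, `N_B(ρ) = ∞` for every `ρ ∈ (0,1)`, and consequently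
`N_B^Δ(ρ) = ∞` for every `ρ ∈ (0,1/2)`. -/
theorem statement18
    (Aset : Set (ℕ → ℝ)) (hAset : Aset = {a : ℕ → ℝ | ∀ n, a n ∈ Set.Icc (0 : ℝ) 1})
    (Bset : Set (ℕ → ℝ))
    (hBset : Bset = {b : ℕ → ℝ | (Function.support b).Finite ∧ ∑' n, |b n| ≤ 1})
    (h : (ℕ → ℝ) → (ℕ → ℝ) → ℝ) (hh : ∀ a b, h a b = ∑' n, a n * b n)
    (dA : (ℕ → ℝ) → (ℕ → ℝ) → ℝ)
    (hdA : ∀ a ∈ Aset, ∀ a' ∈ Aset, dA a a' = ⨆ b : Bset, |h a b - h a' b|)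
    (dB : (ℕ → ℝ) → (ℕ → ℝ) → ℝ)
    (hdB : ∀ b ∈ Bset, ∀ b' ∈ Bset, dB b b' = ⨆ a : Aset, |h a b - h a b'|) :
    icov dA Aset (1 / 2) = 1 ∧
    icov dB Bset 1 = 1 ∧
    (∀ ρ : ℝ, 0 < ρ → ρ < 1 → icov dB Bset ρ = ⊤) ∧
    (∀ ρ : ℝ, 0 < ρ → ρ < 1 / 2 → dcovIn dB Bset ρ = ⊤) := by
  subst hAset
  subst hBset
  
  
  -- basic membership facts
  have hA0 : (fun _ => (0 : ℝ)) ∈ {a : ℕ → ℝ | ∀ n, a n ∈ Set.Icc (0 : ℝ) 1} :=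
    fun n => ⟨le_refl 0, zero_le_one⟩
  have hAhalf : (fun _ => (1 / 2 : ℝ)) ∈ {a : ℕ → ℝ | ∀ n, a n ∈ Set.Icc (0 : ℝ) 1} :=
    fun n => ⟨by norm_num, by norm_num⟩
  have hB0 : (fun _ => (0 : ℝ)) ∈
      {b : ℕ → ℝ | (Function.support b).Finite ∧ ∑' n, |b n| ≤ 1} := by
    refine ⟨?_, ?_⟩
    · convert Set.finite_empty
      simp [Function.support]
    · simp
  have heA : ∀ n, eseq n ∈ {a : ℕ → ℝ | ∀ n, a n ∈ Set.Icc (0 : ℝ) 1} := by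
    intro n; intro k
    by_cases hk : k = n <;> simp [eseq, hk]
  have heB : ∀ n, eseq n ∈
      {b : ℕ → ℝ | (Function.support b).Finite ∧ ∑' n, |b n| ≤ 1} := by
    intro n
    exact ⟨eseq_support n, le_of_eq (eseq_abs_tsum n)⟩
  -- one-sided bound on |h a b|
  have habs1 : ∀ a ∈ {a : ℕ → ℝ | ∀ n, a n ∈ Set.Icc (0 : ℝ) 1}, ∀ b ∈ {b : ℕ → ℝ | (Function.support b).Finite ∧ ∑' n, |b n| ≤ 1}, |h a b| ≤ 1 := by
    intro a ha b hb
    rw [hh]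
    refine tsum_mul_bound zero_le_one (fun n => ?_) hb.1 hb.2
    have := ha n
    rw [abs_le]; constructor <;> [linarith [this.1]; exact this.2]
  -- boundedness of the families defining dB suprema
  have hbdd : ∀ b ∈ {b : ℕ → ℝ | (Function.support b).Finite ∧ ∑' n, |b n| ≤ 1}, ∀ b' ∈ {b : ℕ → ℝ | (Function.support b).Finite ∧ ∑' n, |b n| ≤ 1},
      BddAbove (Set.range fun a : {a : ℕ → ℝ | ∀ n, a n ∈ Set.Icc (0 : ℝ) 1} => |h a b - h a b'|) := by
    intro b hb b' hb'
    refine ⟨2, ?_⟩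
    rintro x ⟨a, rfl⟩
    calc |h a b - h a b'| ≤ |h a b| + |h a b'| := abs_sub _ _
      _ ≤ 1 + 1 := add_le_add (habs1 a a.2 b hb) (habs1 a a.2 b' hb')
      _ = 2 := by norm_num
  have hdB_lb : ∀ b ∈ {b : ℕ → ℝ | (Function.support b).Finite ∧ ∑' n, |b n| ≤ 1}, ∀ b' ∈ {b : ℕ → ℝ | (Function.support b).Finite ∧ ∑' n, |b n| ≤ 1}, ∀ a ∈ {a : ℕ → ℝ | ∀ n, a n ∈ Set.Icc (0 : ℝ) 1},
      |h a b - h a b'| ≤ dB b b' := by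
    intro b hb b' hb' a ha
    rw [hdB b hb b' hb']
    exact le_ciSup (hbdd b hb b' hb') ⟨a, ha⟩
  -- key fact: any point covering `eseq n` at radius ρ < 1 must be supported at n
  have hkey : ∀ (ρ : ℝ), ρ < 1 → ∀ n, ∀ y ∈ {b : ℕ → ℝ | (Function.support b).Finite ∧ ∑' n, |b n| ≤ 1}, dB (eseq n) y ≤ ρ → y n ≠ 0 := by
    intro ρ hρ n y hy hd hy0
    have h1 : |h (eseq n) (eseq n) - h (eseq n) y| ≤ dB (eseq n) y :=
      hdB_lb (eseq n) (heB n) y hy (eseq n) (heA n)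
    rw [hh, hh, tsum_eseq_mul, tsum_eseq_mul] at h1
    have he1 : eseq n n = 1 := by simp [eseq]
    rw [he1, hy0, sub_zero, abs_one] at h1
    linarith [le_trans h1 hd]
  -- distance between distinct basis vectors is at least 1
  have hdist : ∀ n m : ℕ, n ≠ m → (1 : ℝ) ≤ dB (eseq n) (eseq m) := by
    intro n m hnm
    have h1 : |h (eseq n) (eseq n) - h (eseq n) (eseq m)| ≤ dB (eseq n) (eseq m) :=
      hdB_lb (eseq n) (heB n) (eseq m) (heB m) (eseq n) (heA n)
    rw [hh, hh, tsum_eseq_mul, tsum_eseq_mul] at h1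
    have he1 : eseq n n = 1 := by simp [eseq]
    have he2 : eseq m n = 0 := by simp [eseq, hnm]
    rw [he1, he2, sub_zero, abs_one] at h1
    exact h1
  refine ⟨?_, ?_, ?_, ?_⟩
  -- Part 1 : N_A(1/2) = 1
  · refine le_antisymm ?_ ?_
    · refine sInf_le ⟨{fun _ => (1 / 2 : ℝ)}, ⟨?_, ?_⟩, by simp⟩
      · intro x hx
        simp only [Finset.coe_singleton, Set.mem_singleton_iff] at hx
        rw [hx]; exact hAhalf
      · intro a ha
        refine ⟨fun _ => (1 / 2 : ℝ), Finset.mem_singleton_self _, ?_⟩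
        rw [hdA a ha _ hAhalf]
        refine Real.iSup_le (fun b => ?_) (by norm_num)
        have hb := b.2
        rw [hh, hh]
        refine tsum_pair_bound (by norm_num) (fun n => ?_) hb.1 hb.2
        have := ha n
        rw [abs_le]; constructor <;> [linarith [this.1]; linarith [this.2]]
    · refine le_sInf ?_
      rintro m ⟨F, ⟨hsub, hcov⟩, rfl⟩
      obtain ⟨y, hy, -⟩ := hcov _ hA0
      show (1 : ℕ∞) ≤ (F.card : ℕ∞)
      exact_mod_cast Nat.one_le_iff_ne_zero.mpr (Finset.card_ne_zero_of_mem hy)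
  -- Part 2 : N_B(1) = 1
  · refine le_antisymm ?_ ?_
    · refine sInf_le ⟨{fun _ => (0 : ℝ)}, ⟨?_, ?_⟩, by simp⟩
      · intro x hx
        simp only [Finset.coe_singleton, Set.mem_singleton_iff] at hx
        rw [hx]; exact hB0
      · intro b hb
        refine ⟨fun _ => (0 : ℝ), Finset.mem_singleton_self _, ?_⟩
        rw [hdB b hb _ hB0]
        refine Real.iSup_le (fun a => ?_) zero_le_one
        have hz : h a (fun _ => (0 : ℝ)) = 0 := by
          rw [hh]; simp
        rw [hz, sub_zero]
        exact habs1 a a.2 b hb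
    · refine le_sInf ?_
      rintro m ⟨F, ⟨hsub, hcov⟩, rfl⟩
      obtain ⟨y, hy, -⟩ := hcov _ hB0
      show (1 : ℕ∞) ≤ (F.card : ℕ∞)
      exact_mod_cast Nat.one_le_iff_ne_zero.mpr (Finset.card_ne_zero_of_mem hy)
  -- Part 3 : N_B(ρ) = ∞ for ρ < 1
  · intro ρ hρ0 hρ1
    have hempty : {F : Finset (ℕ → ℝ) | ↑F ⊆ {b : ℕ → ℝ | (Function.support b).Finite ∧ ∑' n, |b n| ≤ 1} ∧ ∀ x ∈ {b : ℕ → ℝ | (Function.support b).Finite ∧ ∑' n, |b n| ≤ 1}, ∃ y ∈ F, dB x y ≤ ρ} = ∅ := by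
      rw [Set.eq_empty_iff_forall_notMem]
      rintro F ⟨hsub, hcov⟩
      have H : ∀ n : ℕ, ∃ y, y ∈ F ∧ dB (eseq n) y ≤ ρ := by
        intro n
        obtain ⟨y, hy, hyd⟩ := hcov (eseq n) (heB n)
        exact ⟨y, hy, hyd⟩
      choose y hyF hyd using H
      have hsupp : ∀ n, n ∈ Function.support (y n) := fun n =>
        hkey ρ hρ1 n (y n) (hsub (hyF n)) (hyd n)
      have hfin : (⋃ z ∈ F, Function.support z).Finite := by
        refine Set.Finite.biUnion F.finite_toSet fun z hz => ?_
        exact (hsub hz).1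
      have huniv : (Set.univ : Set ℕ) ⊆ ⋃ z ∈ F, Function.support z := by
        intro n _
        exact Set.mem_biUnion (hyF n) (hsupp n)
      exact Set.infinite_univ (hfin.subset huniv)
    rw [icov, hempty, Set.image_empty, sInf_empty]
  -- Part 4 : N_B^Δ(ρ) = ∞ for ρ < 1/2
  · intro ρ hρ0 hρ2
    have hempty : {k : ℕ | ∃ G : Fin k → Set (ℕ → ℝ), (∀ i, G i ⊆ {b : ℕ → ℝ | (Function.support b).Finite ∧ ∑' n, |b n| ≤ 1}) ∧
        (∀ i, ∀ x ∈ G i, ∀ y ∈ G i, dB x y ≤ 2 * ρ) ∧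
        {b : ℕ → ℝ | (Function.support b).Finite ∧ ∑' n, |b n| ≤ 1} ⊆ ⋃ i, G i} = ∅ := by
      rw [Set.eq_empty_iff_forall_notMem]
      rintro k ⟨G, hGsub, hGdiam, hGcov⟩
      have H : ∀ n : ℕ, ∃ i, eseq n ∈ G i := by
        intro n
        have := hGcov (heB n)
        exact Set.mem_iUnion.mp this
      choose f hf using H
      have hinj : Function.Injective f := by
        intro n m hfnm
        by_contra hnm
        have h1 : dB (eseq n) (eseq m) ≤ 2 * ρ :=
          hGdiam (f n) (eseq n) (hf n) (eseq m) (hfnm ▸ hf m)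
        have h2 := hdist n m hnm
        linarith
      have : Finite ℕ := Finite.of_injective f hinj
      exact not_finite ℕ
    rw [dcovIn, hempty, Set.image_empty, sInf_empty]
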